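/- arXiv:math/0608167 — 2 statements merged into one kernel-verified Lean document; each statement's English description precedes it below -/
import Mathlib

section
/- Let n ≥ 1 be a natural number and m₁,…,mₙ ∈ ℕ. For each k with 2 ≤ k ≤ n let φ_k(t, x₁, …, x_{k−1}) = c_{k,0}·t + c_{k,1}·x₁ + ⋯ + c_{k,k−1}·x_{k−1} be a homogeneous linear function with nonnegative real coefficients c_{k,l} ≥ 0. For t ∈ ℕ set Ω_t = { a ∈ ℕⁿ : a₁ ≤ t, and a_k ≤ φ_k(t, a₁, …, a_{k−1}) for all 2 ≤ k ≤ n }, and set R₁ = { x ∈ ℝⁿ : 0 ≤ x₁ ≤ 1, and 0 ≤ x_k ≤ φ_k(1, x₁, …, x_{k−1}) for all 2 ≤ k ≤ n }. Then, as t → ∞ through the natural numbers, t^{−(m₁+⋯+mₙ+n)} · Σ_{a ∈ Ω_t} a₁^{m₁} ⋯ aₙ^{mₙ} converges to the Lebesgue integral ∫_{R₁} x₁^{m₁} ⋯ xₙ^{mₙ} dx; equivalently, the lattice sum equals the iterated integral ∫₀^t ∫₀^{φ₂(t,x₁)} ⋯ ∫₀^{φₙ(t,x₁,…,x_{n−1})}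 x₁^{m₁}⋯xₙ^{mₙ} dxₙ⋯dx₁ up to terms of lower order in t. -/
open Filter Topology MeasureTheory Finset



namespace LatticeAux

variable {n : ℕ}

/-- The condition defining `Ω_t`. -/
def Cond (hn : 1 ≤ n) (c : Fin n → ℝ) (C : Fin n → Fin n → ℝ) (t : ℕ) (a : Fin n → ℕ) : Prop :=
  (a ⟨0, hn⟩ : ℝ) ≤ (t : ℝ) ∧
    ∀ k : Fin n, k ≠ ⟨0, hn⟩ →
      (a k : ℝ) ≤ c k * (t : ℝ) +
        ∑ l ∈ univ.filter (fun l : Fin n => l < k), C k l * (a l : ℝ)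

/-- A big constant. -/
noncomputable def QQ (c : Fin n → ℝ) (C : Fin n → Fin n → ℝ) : ℝ :=
  1 + ∑ k, |c k| + ∑ k, ∑ l, |C k l|

lemma one_le_QQ (c : Fin n → ℝ) (C : Fin n → Fin n → ℝ) : 1 ≤ QQ c C := by
  have h1 : (0:ℝ) ≤ ∑ k, |c k| := Finset.sum_nonneg fun k _ => abs_nonneg _
  have h2 : (0:ℝ) ≤ ∑ k, ∑ l, |C k l| :=
    Finset.sum_nonneg fun k _ => Finset.sum_nonneg fun l _ => abs_nonneg _
  unfold QQ; linarith

lemma QQ_nonneg (c : Fin n → ℝ) (C : Fin n → Fin n → ℝ) : 0 ≤ QQ c C :=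
  le_trans zero_le_one (one_le_QQ c C)

lemma cond_bound (hn : 1 ≤ n) {c : Fin n → ℝ} {C : Fin n → Fin n → ℝ}
    (hC : ∀ k l : Fin n, l < k → 0 ≤ C k l)
    {t : ℕ} {a : Fin n → ℕ} (ha : Cond hn c C t a) (k : Fin n) :
    (a k : ℝ) ≤ QQ c C ^ ((k : ℕ) + 1) * t := by
  set Q := QQ c C with hQdef
  have hQ1 : 1 ≤ Q := one_le_QQ c C
  have hQ0 : 0 ≤ Q := QQ_nonneg c C
  have ht0 : (0:ℝ) ≤ t := Nat.cast_nonneg t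
  have main : ∀ N : ℕ, ∀ k : Fin n, (k : ℕ) < N → (a k : ℝ) ≤ Q ^ ((k : ℕ) + 1) * t := by
    intro N
    induction N with
    | zero => intro k hk; exact absurd hk (Nat.not_lt_zero _)
    | succ N ih =>
      intro k hk
      by_cases hk0 : k = ⟨0, hn⟩
      · subst hk0
        calc (a ⟨0, hn⟩ : ℝ) ≤ t := ha.1
          _ = 1 * t := (one_mul _).symm
          _ ≤ Q ^ (((⟨0, hn⟩ : Fin n) : ℕ) + 1) * t :=
              mul_le_mul_of_nonneg_right (one_le_pow₀ hQ1) ht0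
      · have h2 := ha.2 k hk0
        have hQk : (1:ℝ) ≤ Q ^ (k:ℕ) := one_le_pow₀ hQ1
        have hQkt : (0:ℝ) ≤ Q ^ (k:ℕ) * t := mul_nonneg (by linarith) ht0
        have hsum1 : ∑ l ∈ univ.filter (fun l : Fin n => l < k), C k l * (a l : ℝ)
            ≤ ∑ l ∈ univ.filter (fun l : Fin n => l < k), C k l * (Q ^ (k:ℕ) * t) := by
          apply Finset.sum_le_sum
          intro l hl
          have hlk : l < k := (Finset.mem_filter.1 hl).2
          have hlk' : (l : ℕ) < (k : ℕ) := hlk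
          have hIH : (a l : ℝ) ≤ Q ^ ((l : ℕ) + 1) * t := ih l (by omega)
          have hpow : Q ^ ((l : ℕ) + 1) ≤ Q ^ (k : ℕ) := pow_le_pow_right₀ hQ1 (by omega)
          have : (a l : ℝ) ≤ Q ^ (k:ℕ) * t :=
            hIH.trans (mul_le_mul_of_nonneg_right hpow ht0)
          exact mul_le_mul_of_nonneg_left this (hC k l hlk)
        have hsum2 : ∑ l ∈ univ.filter (fun l : Fin n => l < k), C k l * (Q ^ (k:ℕ) * t)
            = (∑ l ∈ univ.filter (fun l : Fin n => l < k), C k l) * (Q ^ (k:ℕ) * t) := by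
          rw [Finset.sum_mul]
        have hCs : (∑ l ∈ univ.filter (fun l : Fin n => l < k), C k l)
            ≤ ∑ k', ∑ l', |C k' l'| := by
          calc (∑ l ∈ univ.filter (fun l : Fin n => l < k), C k l)
              ≤ ∑ l ∈ univ.filter (fun l : Fin n => l < k), |C k l| :=
                Finset.sum_le_sum fun l _ => le_abs_self _
            _ ≤ ∑ l, |C k l| :=
                Finset.sum_le_sum_of_subset_of_nonneg (Finset.filter_subset _ _)
                  (fun l _ _ => abs_nonneg _)
            _ ≤ ∑ k', ∑ l', |C k' l'| :=
                Finset.single_le_sum (f := fun k' => ∑ l', |C k' l'|) (fun k' _ => Finset.sum_nonneg fun l' _ => abs_nonneg _)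
                  (Finset.mem_univ k)
        have hck : c k ≤ ∑ k', |c k'| :=
          (le_abs_self _).trans
            (Finset.single_le_sum (f := fun k' => |c k'|) (fun k' _ => abs_nonneg _) (Finset.mem_univ k))
        have hc0 : (0:ℝ) ≤ ∑ k', |c k'| := Finset.sum_nonneg fun k' _ => abs_nonneg _
        have htQ : (t:ℝ) ≤ Q ^ (k:ℕ) * t := by nlinarith
        calc (a k : ℝ)
            ≤ c k * (t : ℝ) + ∑ l ∈ univ.filter (fun l : Fin n => l < k), C k l * (a l : ℝ) := h2
          _ ≤ (∑ k', |c k'|) * (Q ^ (k:ℕ) * t) +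
              (∑ k', ∑ l', |C k' l'|) * (Q ^ (k:ℕ) * t) := by
              apply add_le_add
              · calc c k * (t:ℝ) ≤ (∑ k', |c k'|) * t := by
                      apply mul_le_mul_of_nonneg_right hck ht0
                  _ ≤ (∑ k', |c k'|) * (Q ^ (k:ℕ) * t) := by
                      apply mul_le_mul_of_nonneg_left htQ hc0
              · calc ∑ l ∈ univ.filter (fun l : Fin n => l < k), C k l * (a l : ℝ)
                    ≤ (∑ l ∈ univ.filter (fun l : Fin n => l < k), C k l) * (Q ^ (k:ℕ) * t) := by
                      rw [← hsum2]; exact hsum1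
                  _ ≤ (∑ k', ∑ l', |C k' l'|) * (Q ^ (k:ℕ) * t) :=
                      mul_le_mul_of_nonneg_right hCs hQkt
          _ = (Q - 1) * (Q ^ (k:ℕ) * t) := by rw [hQdef]; unfold QQ; ring
          _ ≤ Q * (Q ^ (k:ℕ) * t) := by nlinarith
          _ = Q ^ ((k:ℕ) + 1) * t := by rw [pow_succ]; ring
  exact main ((k:ℕ)+1) k (Nat.lt_succ_self _)



def box (a : Fin n → ℕ) : Set (Fin n → ℝ) :=
  Set.univ.pi fun j => Set.Ico (a j : ℝ) (a j + 1)

lemma measurableSet_box (a : Fin n → ℕ) : MeasurableSet (box a) :=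
  MeasurableSet.univ_pi fun _ => measurableSet_Ico

lemma volume_box (a : Fin n → ℕ) : volume (box a) = 1 := by
  rw [box, volume_pi_pi]
  simp [Real.volume_Ico]

lemma mem_box_iff_floor {a : Fin n → ℕ} {x : Fin n → ℝ} (hx : ∀ j, 0 ≤ x j) :
    x ∈ box a ↔ a = fun j => ⌊x j⌋₊ := by
  simp only [box, Set.mem_pi, Set.mem_univ, forall_true_left, Set.mem_Ico]
  constructor
  · intro h
    funext j
    exact ((Nat.floor_eq_iff (hx j)).2 ⟨(h j).1, (h j).2⟩).symm
  · rintro rfl j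
    exact ⟨Nat.floor_le (hx j), Nat.lt_floor_add_one _⟩

lemma nonneg_of_mem_box {a : Fin n → ℕ} {x : Fin n → ℝ} (hx : x ∈ box a) (j : Fin n) :
    0 ≤ x j := by
  have := hx j (Set.mem_univ j)
  exact le_trans (Nat.cast_nonneg _) this.1



section
variable (hn : 1 ≤ n) (m : Fin n → ℕ) (c : Fin n → ℝ) (C : Fin n → Fin n → ℝ)

/-- weight of a lattice point -/
noncomputable def w (a : Fin n → ℕ) : ℝ := ∏ j, (a j : ℝ) ^ (m j)

/-- the finite set of lattice points in `Ω_t` -/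
noncomputable def A (t : ℕ) : Finset (Fin n → ℕ) :=
  @Finset.filter _ (Cond hn c C t) (Classical.decPred _)
    (Fintype.piFinset fun _ => Finset.range (⌊QQ c C ^ n * t⌋₊ + 1))

lemma mem_A_iff (hC : ∀ k l : Fin n, l < k → 0 ≤ C k l) {t : ℕ} {a : Fin n → ℕ} :
    a ∈ A hn c C t ↔ Cond hn c C t a := by
  classical
  unfold A
  rw [Finset.mem_filter]
  constructor
  · exact fun h => h.2
  · intro h
    refine ⟨?_, h⟩
    rw [Fintype.mem_piFinset]
    intro j
    rw [Finset.mem_range, Nat.lt_succ_iff, Nat.le_floor_iff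
      (mul_nonneg (pow_nonneg (QQ_nonneg c C) _) (Nat.cast_nonneg _))]
    have h1 : (a j : ℝ) ≤ QQ c C ^ ((j : ℕ) + 1) * t := cond_bound hn hC h j
    have h2 : QQ c C ^ ((j : ℕ) + 1) ≤ QQ c C ^ n :=
      pow_le_pow_right₀ (one_le_QQ c C) (by have := j.2; omega)
    exact h1.trans (mul_le_mul_of_nonneg_right h2 (Nat.cast_nonneg _))

/-- the step function whose integral is the lattice sum -/
noncomputable def F (t : ℕ) (x : Fin n → ℝ) : ℝ :=
  ∑ a ∈ A hn c C t, Set.indicator (box a) (fun _ => w m a) x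

lemma F_nonneg (t : ℕ) (x : Fin n → ℝ) : 0 ≤ F hn m c C t x := by
  apply Finset.sum_nonneg
  intro a _
  apply Set.indicator_nonneg
  intro _ _
  exact Finset.prod_nonneg fun j _ => pow_nonneg (Nat.cast_nonneg _) _

lemma measurable_F (t : ℕ) : Measurable (F hn m c C t) := by
  apply Finset.measurable_sum
  intro a _
  exact (measurable_const).indicator (measurableSet_box a)

lemma integrable_F (t : ℕ) : Integrable (F hn m c C t) := by
  apply MeasureTheory.integrable_finset_sum
  intro a _
  rw [MeasureTheory.integrable_indicator_iff (measurableSet_box a)]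
  exact MeasureTheory.integrableOn_const (by rw [volume_box]; exact ENNReal.one_ne_top)

lemma integral_F (t : ℕ) : ∫ x, F hn m c C t x = ∑ a ∈ A hn c C t, w m a := by
  unfold F
  rw [MeasureTheory.integral_finset_sum]
  · apply Finset.sum_congr rfl
    intro a _
    rw [MeasureTheory.integral_indicator_const _ (measurableSet_box a), measureReal_def, volume_box]
    simp
  · intro a _
    rw [MeasureTheory.integrable_indicator_iff (measurableSet_box a)]
    exact MeasureTheory.integrableOn_const (by rw [volume_box]; exact ENNReal.one_ne_top)

lemma tsum_eq_sum_A (hC : ∀ k l : Fin n, l < k → 0 ≤ C k l) (t : ℕ) :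
    (∑' a : {a : Fin n → ℕ // Cond hn c C t a}, w m (a : Fin n → ℕ))
      = ∑ a ∈ A hn c C t, w m a := by
  classical
  have h1 : (∑' a : {a : Fin n → ℕ // Cond hn c C t a}, w m (a : Fin n → ℕ))
      = ∑' a : Fin n → ℕ, Set.indicator {a : Fin n → ℕ | Cond hn c C t a} (w m) a :=
    tsum_subtype {a : Fin n → ℕ | Cond hn c C t a} (w m)
  rw [h1]
  rw [tsum_eq_sum (s := A hn c C t) (f := Set.indicator {a : Fin n → ℕ | Cond hn c C t a} (w m))
    (fun b hb => Set.indicator_of_notMem (s := {a : Fin n → ℕ | Cond hn c C t a}) (fun hbmem => hb ((mem_A_iff hn c C hC).2 hbmem)) _)]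
  apply Finset.sum_congr rfl
  intro a ha
  exact Set.indicator_of_mem (s := {a : Fin n → ℕ | Cond hn c C t a}) ((mem_A_iff hn c C hC).1 ha) _

lemma eval_F_pos (hC : ∀ k l : Fin n, l < k → 0 ≤ C k l) (t : ℕ) {x : Fin n → ℝ}
    (hx : ∀ j, 0 ≤ x j) (hcond : Cond hn c C t (fun j => ⌊x j⌋₊)) :
    F hn m c C t x = w m (fun j => ⌊x j⌋₊) := by
  unfold F
  rw [Finset.sum_eq_single_of_mem (fun j => ⌊x j⌋₊) ((mem_A_iff hn c C hC).2 hcond)]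
  · exact Set.indicator_of_mem ((mem_box_iff_floor hx).2 rfl) _
  · intro b _ hb
    apply Set.indicator_of_notMem
    intro hmem
    exact hb ((mem_box_iff_floor hx).1 hmem)

lemma eval_F_neg (hC : ∀ k l : Fin n, l < k → 0 ≤ C k l) (t : ℕ) {x : Fin n → ℝ}
    (hx : ∀ j, 0 ≤ x j) (hcond : ¬ Cond hn c C t (fun j => ⌊x j⌋₊)) :
    F hn m c C t x = 0 := by
  unfold F
  apply Finset.sum_eq_zero
  intro b hb
  apply Set.indicator_of_notMem
  intro hmem
  have : b = fun j => ⌊x j⌋₊ := (mem_box_iff_floor hx).1 hmem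
  rw [this] at hb
  exact hcond ((mem_A_iff hn c C hC).1 hb)

lemma F_eq_zero_of_neg (t : ℕ) {x : Fin n → ℝ} (hx : ∃ j, x j < 0) :
    F hn m c C t x = 0 := by
  unfold F
  apply Finset.sum_eq_zero
  intro b _
  apply Set.indicator_of_notMem
  intro hmem
  obtain ⟨j, hj⟩ := hx
  exact absurd (nonneg_of_mem_box hmem j) (not_le.2 hj)

end


section RRsec
variable (hn : 1 ≤ n) (c : Fin n → ℝ) (C : Fin n → Fin n → ℝ)

def RR : Set (Fin n → ℝ) :=
  {x : Fin n → ℝ |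
    (0 ≤ x ⟨0, hn⟩ ∧ x ⟨0, hn⟩ ≤ 1) ∧
    ∀ k : Fin n, k ≠ ⟨0, hn⟩ →
      0 ≤ x k ∧
        x k ≤ c k * 1 + ∑ l ∈ univ.filter (fun l : Fin n => l < k), C k l * x l}

lemma convex_RR : Convex ℝ (RR hn c C) := by
  intro x hx y hy a b ha hb hab
  have hcombo : ∀ j : Fin n, (a • x + b • y) j = a * x j + b * y j := by
    intro j; simp [Pi.add_apply, Pi.smul_apply, smul_eq_mul]
  refine ⟨⟨?_, ?_⟩, fun k hk => ⟨?_, ?_⟩⟩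
  · rw [hcombo]
    exact add_nonneg (mul_nonneg ha hx.1.1) (mul_nonneg hb hy.1.1)
  · rw [hcombo]
    nlinarith [hx.1.2, hy.1.2]
  · rw [hcombo]
    exact add_nonneg (mul_nonneg ha (hx.2 k hk).1) (mul_nonneg hb (hy.2 k hk).1)
  · rw [hcombo]
    have hsum : ∑ l ∈ univ.filter (fun l : Fin n => l < k), C k l * ((a • x + b • y) l)
        = a * (∑ l ∈ univ.filter (fun l : Fin n => l < k), C k l * x l)
          + b * (∑ l ∈ univ.filter (fun l : Fin n => l < k), C k l * y l) := by
      rw [Finset.mul_sum, Finset.mul_sum, ← Finset.sum_add_distrib]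
      apply Finset.sum_congr rfl
      intro l _
      rw [hcombo]; ring
    rw [hsum]
    have h1 := (hx.2 k hk).2
    have h2 := (hy.2 k hk).2
    have habc : a * (c k * 1) + b * (c k * 1) = c k * 1 := by rw [← add_mul, hab, one_mul]
    linarith [mul_le_mul_of_nonneg_left h1 ha, mul_le_mul_of_nonneg_left h2 hb, habc]

lemma measurableSet_RR : MeasurableSet (RR hn c C) := by
  have hrw : RR hn c C = ({x : Fin n → ℝ | 0 ≤ x ⟨0, hn⟩} ∩ {x : Fin n → ℝ | x ⟨0, hn⟩ ≤ 1}) ∩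
      ⋂ (k : Fin n), ⋂ (_ : k ≠ ⟨0, hn⟩),
        ({x : Fin n → ℝ | 0 ≤ x k} ∩
         {x : Fin n → ℝ |
           x k ≤ c k * 1 + ∑ l ∈ univ.filter (fun l : Fin n => l < k), C k l * x l}) := by
    ext x
    simp only [RR, Set.mem_setOf_eq, Set.mem_inter_iff, Set.mem_iInter]
  rw [hrw]
  apply MeasurableSet.inter
  · exact (measurableSet_le measurable_const (measurable_pi_apply _)).inter
      (measurableSet_le (measurable_pi_apply _) measurable_const)
  · apply MeasurableSet.iInter
    intro k
    apply MeasurableSet.iInter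
    intro _
    apply MeasurableSet.inter
    · exact measurableSet_le measurable_const (measurable_pi_apply _)
    · apply measurableSet_le (measurable_pi_apply _)
      apply Measurable.add measurable_const
      exact Finset.measurable_sum _ fun l _ => by fun_prop

lemma isClosed_RR : IsClosed (RR hn c C) := by
  have hrw : RR hn c C = ({x : Fin n → ℝ | 0 ≤ x ⟨0, hn⟩} ∩ {x : Fin n → ℝ | x ⟨0, hn⟩ ≤ 1}) ∩
      ⋂ (k : Fin n), ⋂ (_ : k ≠ ⟨0, hn⟩),
        ({x : Fin n → ℝ | 0 ≤ x k} ∩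
         {x : Fin n → ℝ |
           x k ≤ c k * 1 + ∑ l ∈ univ.filter (fun l : Fin n => l < k), C k l * x l}) := by
    ext x
    simp only [RR, Set.mem_setOf_eq, Set.mem_inter_iff, Set.mem_iInter]
  rw [hrw]
  apply IsClosed.inter
  · exact (isClosed_le continuous_const (continuous_apply _)).inter
      (isClosed_le (continuous_apply _) continuous_const)
  · apply isClosed_iInter
    intro k
    apply isClosed_iInter
    intro _
    apply IsClosed.inter
    · exact isClosed_le continuous_const (continuous_apply _)
    · apply isClosed_le (continuous_apply _)
      apply Continuous.add continuous_const
      exact continuous_finset_sum _ fun l _ => continuous_const.mul (continuous_apply l)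

lemma interior_strict {y : Fin n → ℝ} (hy : y ∈ interior (RR hn c C)) :
    (0 ≤ y ⟨0, hn⟩ ∧ y ⟨0, hn⟩ < 1) ∧
    ∀ k : Fin n, k ≠ ⟨0, hn⟩ →
      0 ≤ y k ∧
        y k < c k * 1 + ∑ l ∈ univ.filter (fun l : Fin n => l < k), C k l * y l := by
  have hyR : y ∈ RR hn c C := interior_subset hy
  obtain ⟨ε, hε, hball⟩ := Metric.mem_nhds_iff.1 (mem_interior_iff_mem_nhds.1 hy)
  have key : ∀ k : Fin n, Function.update y k (y k + ε / 2) ∈ RR hn c C := by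
    intro k
    apply hball
    rw [Metric.mem_ball, dist_pi_lt_iff hε]
    intro j
    by_cases hj : j = k
    · subst hj
      rw [Function.update_self, Real.dist_eq]
      rw [show y j + ε / 2 - y j = ε / 2 by ring, abs_of_pos (by linarith)]
      linarith
    · rw [Function.update_of_ne hj, Real.dist_eq, sub_self, abs_zero]
      exact hε
  constructor
  · refine ⟨hyR.1.1, ?_⟩
    have h := (key ⟨0, hn⟩).1.2
    rw [Function.update_self] at h
    linarith
  · intro k hk
    refine ⟨(hyR.2 k hk).1, ?_⟩
    have h := ((key k).2 k hk).2
    rw [Function.update_self] at h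
    have hsum : ∑ l ∈ univ.filter (fun l : Fin n => l < k), C k l * (Function.update y k (y k + ε / 2) l)
        = ∑ l ∈ univ.filter (fun l : Fin n => l < k), C k l * y l := by
      apply Finset.sum_congr rfl
      intro l hl
      have hlk : l < k := (Finset.mem_filter.1 hl).2
      rw [Function.update_of_ne (ne_of_lt hlk)]
    rw [hsum] at h
    linarith

end RRsec


section Pointwise
variable (hn : 1 ≤ n) (m : Fin n → ℕ) {c : Fin n → ℝ} {C : Fin n → Fin n → ℝ}

lemma smul_apply_nonneg {y : Fin n → ℝ} (hy : ∀ j, 0 ≤ y j) (t : ℕ) (j : Fin n) :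
    0 ≤ ((t : ℝ) • y) j := by
  simp only [Pi.smul_apply, smul_eq_mul]
  exact mul_nonneg (Nat.cast_nonneg t) (hy j)

lemma tendsto_inside (hC : ∀ k l : Fin n, l < k → 0 ≤ C k l)
    {y : Fin n → ℝ} (hy : y ∈ interior (RR hn c C)) :
    Tendsto (fun t : ℕ => F hn m c C t ((t : ℝ) • y) / (t : ℝ) ^ (∑ j, m j)) atTop
      (𝓝 (∏ j, (y j) ^ (m j))) := by
  obtain ⟨⟨hy01, hy1⟩, hstrict⟩ := interior_strict hn c C hy
  have hy0 : ∀ j, 0 ≤ y j := by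
    intro j
    by_cases hj : j = ⟨0, hn⟩
    · subst hj; exact hy01
    · exact (hstrict j hj).1
  -- eventually the floor point satisfies the condition
  have hev : ∀ᶠ t : ℕ in atTop, Cond hn c C t (fun j => ⌊(t : ℝ) * y j⌋₊) := by
    have hev2 : ∀ᶠ t : ℕ in atTop, ∀ k : Fin n, k ≠ ⟨0, hn⟩ →
        (⌊(t : ℝ) * y k⌋₊ : ℝ) ≤ c k * (t : ℝ) +
          ∑ l ∈ univ.filter (fun l : Fin n => l < k), C k l * (⌊(t : ℝ) * y l⌋₊ : ℝ) := by
      rw [Filter.eventually_all]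
      intro k
      by_cases hk : k = ⟨0, hn⟩
      · filter_upwards with t hk' ; exact absurd hk hk'
      · set S := univ.filter (fun l : Fin n => l < k) with hS
        set gap := (c k * 1 + ∑ l ∈ S, C k l * y l) - y k with hgap
        have hgap0 : 0 < gap := by
          have := (hstrict k hk).2
          rw [hgap, hS]; linarith
        set K := ∑ l ∈ S, C k l with hK
        have htend : Tendsto (fun t : ℕ => gap * (t : ℝ)) atTop atTop :=
          Tendsto.const_mul_atTop hgap0 tendsto_natCast_atTop_atTop
        filter_upwards [htend.eventually_ge_atTop K] with t hKt hk'
        have ht0 : (0:ℝ) ≤ t := Nat.cast_nonneg t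
        have h1 : (⌊(t : ℝ) * y k⌋₊ : ℝ) ≤ (t : ℝ) * y k :=
          Nat.floor_le (mul_nonneg ht0 (hy0 k))
        have h2 : ∑ l ∈ S, C k l * ((t : ℝ) * y l - 1) ≤
            ∑ l ∈ S, C k l * (⌊(t : ℝ) * y l⌋₊ : ℝ) := by
          apply Finset.sum_le_sum
          intro l hl
          have hlk : l < k := (Finset.mem_filter.1 hl).2
          exact mul_le_mul_of_nonneg_left (Nat.sub_one_lt_floor _).le (hC k l hlk)
        have h3 : ∑ l ∈ S, C k l * ((t : ℝ) * y l - 1)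
            = (t : ℝ) * (∑ l ∈ S, C k l * y l) - K := by
          rw [hK, Finset.mul_sum, ← Finset.sum_sub_distrib]
          apply Finset.sum_congr rfl
          intro l _
          ring
        have hgapt : K ≤ gap * (t : ℝ) := hKt
        rw [hgap] at hgapt
        calc (⌊(t : ℝ) * y k⌋₊ : ℝ) ≤ (t : ℝ) * y k := h1
          _ ≤ c k * (t : ℝ) + ((t : ℝ) * (∑ l ∈ S, C k l * y l) - K) := by nlinarith
          _ = c k * (t : ℝ) + ∑ l ∈ S, C k l * ((t : ℝ) * y l - 1) := by rw [h3]
          _ ≤ c k * (t : ℝ) + ∑ l ∈ S, C k l * (⌊(t : ℝ) * y l⌋₊ : ℝ) := by linarith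
    filter_upwards [hev2] with t h2
    constructor
    · calc ((fun j => ⌊(t : ℝ) * y j⌋₊) ⟨0, hn⟩ : ℝ) ≤ (t : ℝ) * y ⟨0, hn⟩ :=
          Nat.floor_le (mul_nonneg (Nat.cast_nonneg t) (hy0 _))
        _ ≤ (t : ℝ) * 1 := mul_le_mul_of_nonneg_left hy1.le (Nat.cast_nonneg t)
        _ = (t : ℝ) := mul_one _
    · exact h2
  -- eventual equality with the product of floors
  have heq : ∀ᶠ t : ℕ in atTop,
      F hn m c C t ((t : ℝ) • y) / (t : ℝ) ^ (∑ j, m j)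
        = ∏ j, ((⌊(t : ℝ) * y j⌋₊ : ℝ) / (t : ℝ)) ^ (m j) := by
    filter_upwards [hev, eventually_ge_atTop 1] with t hcond ht1
    have ht0 : (0:ℝ) < t := by exact_mod_cast Nat.lt_of_lt_of_le Nat.zero_lt_one ht1
    have hx : ∀ j, 0 ≤ ((t : ℝ) • y) j := smul_apply_nonneg hy0 t
    have hfl : (fun j => ⌊((t : ℝ) • y) j⌋₊) = fun j => ⌊(t : ℝ) * y j⌋₊ := by
      funext j; simp [Pi.smul_apply, smul_eq_mul]
    have := eval_F_pos hn m c C hC t hx (by rw [hfl]; exact hcond)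
    rw [this, hfl]
    unfold w
    have hsplit : ∏ j, ((⌊(t : ℝ) * y j⌋₊ : ℝ) / (t : ℝ)) ^ (m j)
        = (∏ j, (⌊(t : ℝ) * y j⌋₊ : ℝ) ^ (m j)) / ∏ j, (t : ℝ) ^ (m j) := by
      rw [← Finset.prod_div_distrib]
      apply Finset.prod_congr rfl
      intro j _
      rw [div_pow]
    rw [hsplit, Finset.prod_pow_eq_pow_sum]
  have hlim : Tendsto (fun t : ℕ => ∏ j, ((⌊(t : ℝ) * y j⌋₊ : ℝ) / (t : ℝ)) ^ (m j)) atTop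
      (𝓝 (∏ j, (y j) ^ (m j))) := by
    apply tendsto_finset_prod
    intro j _
    have h := (tendsto_nat_floor_mul_div_atTop (R := ℝ) (hy0 j)).comp
      tendsto_natCast_atTop_atTop
    have h' : Tendsto (fun t : ℕ => (⌊(t : ℝ) * y j⌋₊ : ℝ) / (t : ℝ)) atTop (𝓝 (y j)) := by
      apply h.congr
      intro t
      simp only [Function.comp_apply, mul_comm]
    exact h'.pow (m j)
  exact Tendsto.congr' (EventuallyEq.symm heq) hlim

lemma tendsto_outside (hC : ∀ k l : Fin n, l < k → 0 ≤ C k l)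
    {y : Fin n → ℝ} (hy : y ∉ RR hn c C) :
    Tendsto (fun t : ℕ => F hn m c C t ((t : ℝ) • y) / (t : ℝ) ^ (∑ j, m j)) atTop (𝓝 0) := by
  have hzero : ∀ᶠ t : ℕ in atTop, F hn m c C t ((t : ℝ) • y) = 0 := by
    by_cases hneg : ∃ j, y j < 0
    · obtain ⟨j, hj⟩ := hneg
      filter_upwards [eventually_ge_atTop 1] with t ht1
      have ht0 : (0:ℝ) < t := by exact_mod_cast Nat.lt_of_lt_of_le Nat.zero_lt_one ht1
      apply F_eq_zero_of_neg
      exact ⟨j, by simpa [Pi.smul_apply, smul_eq_mul] using mul_neg_of_pos_of_neg ht0 hj⟩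
    · push_neg at hneg
      have hviol : 1 < y ⟨0, hn⟩ ∨ ∃ k : Fin n, k ≠ ⟨0, hn⟩ ∧
          c k * 1 + ∑ l ∈ univ.filter (fun l : Fin n => l < k), C k l * y l < y k := by
        by_contra hcon
        push_neg at hcon
        exact hy ⟨⟨hneg _, hcon.1⟩, fun k hk => ⟨hneg k, hcon.2 k hk⟩⟩
      have hx : ∀ t : ℕ, ∀ j, 0 ≤ ((t : ℝ) • y) j := fun t => smul_apply_nonneg hneg t
      rcases hviol with h1 | ⟨k, hk, hkv⟩
      · have htend : Tendsto (fun t : ℕ => (y ⟨0, hn⟩ - 1) * (t : ℝ)) atTop atTop :=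
          Tendsto.const_mul_atTop (by linarith) tendsto_natCast_atTop_atTop
        filter_upwards [htend.eventually_ge_atTop 1] with t htv
        apply eval_F_neg hn m c C hC t (hx t)
        intro hcond
        have hfloor := hcond.1
        have h2 : ((⟨0, hn⟩ : Fin n) : ℕ) = 0 := rfl
        have hle : (t : ℝ) * y ⟨0, hn⟩ - 1 < (⌊((t : ℝ) • y) ⟨0, hn⟩⌋₊ : ℝ) := by
          have := Nat.sub_one_lt_floor ((t : ℝ) * y ⟨0, hn⟩)
          simpa [Pi.smul_apply, smul_eq_mul] using this
        have : (⌊((t : ℝ) • y) ⟨0, hn⟩⌋₊ : ℝ) ≤ t := hfloor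
        nlinarith
      · set S := univ.filter (fun l : Fin n => l < k) with hS
        set gap := y k - (c k * 1 + ∑ l ∈ S, C k l * y l) with hgap
        have hgap0 : 0 < gap := by rw [hgap, hS]; linarith
        have htend : Tendsto (fun t : ℕ => gap * (t : ℝ)) atTop atTop :=
          Tendsto.const_mul_atTop hgap0 tendsto_natCast_atTop_atTop
        filter_upwards [htend.eventually_ge_atTop 1] with t htv
        apply eval_F_neg hn m c C hC t (hx t)
        intro hcond
        have ht0 : (0:ℝ) ≤ t := Nat.cast_nonneg t
        have hcondk := hcond.2 k hk
        have hfl : ∀ j : Fin n, (⌊((t : ℝ) • y) j⌋₊ : ℝ) = (⌊(t : ℝ) * y j⌋₊ : ℝ) := by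
          intro j; simp [Pi.smul_apply, smul_eq_mul]
        have h1 : (t : ℝ) * y k - 1 < (⌊(t : ℝ) * y k⌋₊ : ℝ) := Nat.sub_one_lt_floor _
        have h2 : ∑ l ∈ S, C k l * (⌊(t : ℝ) * y l⌋₊ : ℝ) ≤
            ∑ l ∈ S, C k l * ((t : ℝ) * y l) := by
          apply Finset.sum_le_sum
          intro l hl
          have hlk : l < k := (Finset.mem_filter.1 hl).2
          exact mul_le_mul_of_nonneg_left (Nat.floor_le (mul_nonneg ht0 (hneg l)))
            (hC k l hlk)
        have h3 : ∑ l ∈ S, C k l * ((t : ℝ) * y l) = (t : ℝ) * ∑ l ∈ S, C k l * y l := by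
          rw [Finset.mul_sum]
          apply Finset.sum_congr rfl
          intro l _
          ring
        have h4 : (⌊(t : ℝ) * y k⌋₊ : ℝ) ≤
            c k * (t : ℝ) + ∑ l ∈ S, C k l * (⌊(t : ℝ) * y l⌋₊ : ℝ) := by
          have := hcondk
          simp only [hfl] at this
          exact this
        rw [hgap] at htv
        nlinarith
  have : Tendsto (fun t : ℕ => (0 : ℝ)) atTop (𝓝 0) := tendsto_const_nhds
  apply Tendsto.congr' _ this
  filter_upwards [hzero] with t ht
  rw [ht, zero_div]

end Pointwise


section Main
variable (hn : 1 ≤ n) (m : Fin n → ℕ) (c : Fin n → ℝ) (C : Fin n → Fin n → ℝ)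

lemma eq_integral (hC : ∀ k l : Fin n, l < k → 0 ≤ C k l) {t : ℕ} (ht : 1 ≤ t) :
    (∑' a : {a : Fin n → ℕ // Cond hn c C t a}, w m (a : Fin n → ℕ)) /
        (t : ℝ) ^ ((∑ j, m j) + n)
      = ∫ y : Fin n → ℝ, F hn m c C t ((t : ℝ) • y) / (t : ℝ) ^ (∑ j, m j) := by
  have ht0 : (0:ℝ) < t := by exact_mod_cast Nat.lt_of_lt_of_le Nat.zero_lt_one ht
  have hcs : ∫ y : Fin n → ℝ, F hn m c C t ((t : ℝ) • y)
      = ((t : ℝ) ^ (Module.finrank ℝ (Fin n → ℝ)))⁻¹ • ∫ x, F hn m c C t x :=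
    MeasureTheory.Measure.integral_comp_smul_of_nonneg volume (F hn m c C t) (t : ℝ)
      (hR := ht0.le)
  rw [MeasureTheory.integral_div, hcs, Module.finrank_fin_fun, integral_F,
    tsum_eq_sum_A hn m c C hC, smul_eq_mul, pow_add]
  rw [inv_mul_eq_div, div_div, mul_comm ((t : ℝ) ^ n)]

lemma main_tendsto (hC : ∀ k l : Fin n, l < k → 0 ≤ C k l) :
    Tendsto
      (fun t : ℕ =>
        (∑' a : {a : Fin n → ℕ // Cond hn c C t a}, w m (a : Fin n → ℕ)) /
          (t : ℝ) ^ ((∑ j, m j) + n))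
      atTop
      (𝓝 (∫ y : Fin n → ℝ,
        Set.indicator (RR hn c C) (fun y => ∏ j, (y j) ^ (m j)) y)) := by
  classical
  set M := ∑ j, m j with hM
  set Q := QQ c C with hQ
  have hQ1 : 1 ≤ Q := one_le_QQ c C
  have hQ0 : 0 ≤ Q := QQ_nonneg c C
  set Big : Set (Fin n → ℝ) := Set.univ.pi fun _ => Set.Icc (0:ℝ) (Q ^ n + 1) with hBig
  have hBigMeas : MeasurableSet Big := MeasurableSet.univ_pi fun _ => measurableSet_Icc
  have hBigVol : volume Big < ⊤ :=
    (isCompact_univ_pi fun _ => isCompact_Icc).measure_lt_top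
  set bound : (Fin n → ℝ) → ℝ := Set.indicator Big (fun _ => Q ^ (n * M)) with hbound
  have hDCT := MeasureTheory.tendsto_integral_filter_of_dominated_convergence
    (μ := volume) (l := atTop)
    (F := fun (t : ℕ) (y : Fin n → ℝ) => F hn m c C t ((t : ℝ) • y) / (t : ℝ) ^ M)
    (f := Set.indicator (RR hn c C) (fun y => ∏ j, (y j) ^ (m j)))
    bound ?_ ?_ ?_ ?_
  · apply Tendsto.congr' _ hDCT
    filter_upwards [eventually_ge_atTop 1] with t ht
    exact (eq_integral hn m c C hC ht).symm
  · -- measurability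
    filter_upwards with t
    exact (((measurable_F hn m c C t).comp (measurable_const_smul (t : ℝ))).div_const
      _).aestronglyMeasurable
  · -- bound
    filter_upwards [eventually_ge_atTop 1] with t ht1
    apply Filter.Eventually.of_forall
    intro y
    have ht0 : (0:ℝ) < t := by exact_mod_cast Nat.lt_of_lt_of_le Nat.zero_lt_one ht1
    have hF0 : 0 ≤ F hn m c C t ((t : ℝ) • y) := F_nonneg hn m c C t _
    have hb0 : 0 ≤ bound y := Set.indicator_nonneg (fun _ _ => pow_nonneg hQ0 _) y
    rw [Real.norm_eq_abs, abs_of_nonneg (div_nonneg hF0 (pow_nonneg ht0.le _))]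
    by_cases hz : F hn m c C t ((t : ℝ) • y) = 0
    · rw [hz, zero_div]; exact hb0
    · obtain ⟨a, haA, hterm⟩ := Finset.exists_ne_zero_of_sum_ne_zero hz
      have hmem : (t : ℝ) • y ∈ box a := by
        by_contra hmem
        exact hterm (Set.indicator_of_notMem hmem _)
      have hx : ∀ j, 0 ≤ ((t : ℝ) • y) j := fun j => nonneg_of_mem_box hmem j
      have hcond : Cond hn c C t a := (mem_A_iff hn c C hC).1 haA
      have habd : ∀ j, (a j : ℝ) ≤ Q ^ n * t := by
        intro j
        have h1 : (a j : ℝ) ≤ Q ^ ((j : ℕ) + 1) * t := cond_bound hn hC hcond j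
        have h2 : Q ^ ((j : ℕ) + 1) ≤ Q ^ n := pow_le_pow_right₀ hQ1 (by have := j.2; omega)
        exact h1.trans (mul_le_mul_of_nonneg_right h2 ht0.le)
      -- y ∈ Big
      have hyBig : y ∈ Big := by
        intro j _
        have hj1 : (a j : ℝ) ≤ (t : ℝ) * y j := by
          have := hmem j (Set.mem_univ j)
          simpa [Pi.smul_apply, smul_eq_mul] using this.1
        have hj2 : (t : ℝ) * y j < (a j : ℝ) + 1 := by
          have := hmem j (Set.mem_univ j)
          simpa [Pi.smul_apply, smul_eq_mul] using this.2
        constructor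
        · have : 0 ≤ (t : ℝ) * y j := le_trans (Nat.cast_nonneg _) hj1
          exact nonneg_of_mul_nonneg_right this ht0
        · have h3 : (t : ℝ) * y j < Q ^ n * t + 1 := lt_of_lt_of_le hj2 (by linarith [habd j])
          have ht1' : (1:ℝ) ≤ (t : ℕ) := by exact_mod_cast ht1
          have h4 : Q ^ n * t + 1 ≤ (Q ^ n + 1) * t := by nlinarith
          exact le_of_mul_le_mul_left (by nlinarith [h3.trans_le h4]) ht0
      -- value bound
      have hval : F hn m c C t ((t : ℝ) • y) ≤ Q ^ (n * M) * (t : ℝ) ^ M := by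
        have hafl : a = fun j => ⌊((t : ℝ) • y) j⌋₊ := (mem_box_iff_floor hx).1 hmem
        have hFval : F hn m c C t ((t : ℝ) • y) = w m a := by
          rw [eval_F_pos hn m c C hC t hx (by rw [← hafl]; exact hcond), ← hafl]
        rw [hFval]
        unfold w
        calc ∏ j, (a j : ℝ) ^ (m j) ≤ ∏ j, (Q ^ n * t) ^ (m j) := by
              apply Finset.prod_le_prod
              · intro j _; exact pow_nonneg (Nat.cast_nonneg _) _
              · intro j _; exact pow_le_pow_left₀ (Nat.cast_nonneg _) (habd j) _
          _ = (Q ^ n * t) ^ M := by rw [Finset.prod_pow_eq_pow_sum]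
          _ = Q ^ (n * M) * (t : ℝ) ^ M := by rw [mul_pow, ← pow_mul]
      have : F hn m c C t ((t : ℝ) • y) / (t : ℝ) ^ M ≤ Q ^ (n * M) := by
        rw [div_le_iff₀ (pow_pos ht0 _)]
        exact hval
      calc F hn m c C t ((t : ℝ) • y) / (t : ℝ) ^ M ≤ Q ^ (n * M) := this
        _ = bound y := (Set.indicator_of_mem hyBig (fun _ => Q ^ (n * M))).symm
  · -- bound integrable
    apply MeasureTheory.IntegrableOn.integrable_indicator _ hBigMeas
    exact MeasureTheory.integrableOn_const hBigVol.ne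
  · -- a.e. convergence
    have hfr : volume (frontier (RR hn c C)) = 0 :=
      (convex_RR hn c C).addHaar_frontier volume
    rw [MeasureTheory.ae_iff]
    apply measure_mono_null _ hfr
    intro y hy
    simp only [Set.mem_setOf_eq] at hy
    by_cases hyR : y ∈ RR hn c C
    · rw [IsClosed.frontier_eq (isClosed_RR hn c C)]
      refine ⟨hyR, fun hint => hy ?_⟩
      rw [Set.indicator_of_mem hyR]
      exact tendsto_inside hn m hC hint
    · exfalso
      apply hy
      rw [Set.indicator_of_notMem hyR]
      exact tendsto_outside hn m hC hyR

end Main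

end LatticeAux


/-- Lemma 4.2: a lattice sum over the regions `Ω_t` cut out by homogeneous linear
bounds `φ_k(t, x₁, …, x_{k-1}) = c_k·t + ∑_{l<k} C_{k,l}·x_l` with nonnegative
coefficients is, to leading order in `t`, the integral of the monomial over the
corresponding region `R₁` at `t = 1`. -/
theorem lattice_sum_asymptotics
    (n : ℕ) (hn : 1 ≤ n) (m : Fin n → ℕ)
    (c : Fin n → ℝ) (C : Fin n → Fin n → ℝ)
    (hc : ∀ k : Fin n, k ≠ ⟨0, hn⟩ → 0 ≤ c k)
    (hC : ∀ k l : Fin n, l < k → 0 ≤ C k l) :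
    Tendsto
      (fun t : ℕ =>
        (∑' a : {a : Fin n → ℕ //
            (a ⟨0, hn⟩ : ℝ) ≤ (t : ℝ) ∧
            ∀ k : Fin n, k ≠ ⟨0, hn⟩ →
              ((a : Fin n → ℕ) k : ℝ) ≤
                c k * (t : ℝ) +
                  ∑ l ∈ univ.filter (fun l : Fin n => l < k),
                    C k l * ((a : Fin n → ℕ) l : ℝ)},
          ∏ j, (((a : Fin n → ℕ) j : ℝ)) ^ (m j)) /
          (t : ℝ) ^ ((∑ j, m j) + n))
      atTop
      (𝓝 (∫ x in {x : Fin n → ℝ |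
          (0 ≤ x ⟨0, hn⟩ ∧ x ⟨0, hn⟩ ≤ 1) ∧
          ∀ k : Fin n, k ≠ ⟨0, hn⟩ →
            0 ≤ x k ∧
              x k ≤ c k * 1 +
                ∑ l ∈ univ.filter (fun l : Fin n => l < k), C k l * x l},
        ∏ j, (x j) ^ (m j))) := by
  have h := LatticeAux.main_tendsto hn m c C hC
  rw [MeasureTheory.integral_indicator (LatticeAux.measurableSet_RR hn c C)] at h
  exact h
end

section
/- Let n ≥ 1 and d ∈ ℕ, and let F : ℝⁿ → ℝ be a continuous function that is positively homogeneous of degree d, i.e. F(t·x) = t^d·F(x) for all t ≥ 0 and x ∈ ℝⁿ. Set S_{n,1} = { x ∈ ℝⁿ : x₁ ≥ x₂ ≥ ⋯ ≥ xₙ ≥ 0 and x₁ + ⋯ + xₙ ≤ 1 }, and for t ∈ ℕ set Λ_t = { a ∈ ℕⁿ : a₁ ≥ a₂ ≥ ⋯ ≥ aₙ ≥ 0 and a₁ + ⋯ + aₙ ≤ t }. Then, as t → ∞ through the natural numbers, t^{−(d+n)} · Σ_{a ∈ Λ_t} F(a) converges to the Lebesgue integral ∫_{S_{n,1}} F dx;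 that is, Σ_{a ∈ Λ_t} F(a) = (∫_{S_{n,1}} F dx)·t^{d+n} + lower order terms. -/
open Filter Topology MeasureTheory BoxIntegral

section aux

variable (n : ℕ)

/-- The simplex-like region `S_{n,1}`. -/
def Sreg : Set (Fin n → ℝ) :=
  {x | (∀ j k : Fin n, j ≤ k → x k ≤ x j) ∧ (∀ j, 0 ≤ x j) ∧ ∑ j, x j ≤ 1}

lemma Sreg_closed : IsClosed (Sreg n) := by
  have h1 : IsClosed {x : Fin n → ℝ | ∀ j k : Fin n, j ≤ k → x k ≤ x j} := by
    simp only [Set.setOf_forall]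
    exact isClosed_iInter fun j => isClosed_iInter fun k => isClosed_iInter fun _ =>
      isClosed_le (continuous_apply k) (continuous_apply j)
  have h2 : IsClosed {x : Fin n → ℝ | ∀ j, 0 ≤ x j} := by
    simp only [Set.setOf_forall]
    exact isClosed_iInter fun j => isClosed_le continuous_const (continuous_apply j)
  have h3 : IsClosed {x : Fin n → ℝ | ∑ j, x j ≤ 1} :=
    isClosed_le (by continuity) continuous_const
  exact (h1.inter (h2.inter h3))

lemma Sreg_convex : Convex ℝ (Sreg n) := by
  intro x hx y hy a b ha hb hab
  obtain ⟨hx1, hx2, hx3⟩ := hx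
  obtain ⟨hy1, hy2, hy3⟩ := hy
  refine ⟨fun j k hjk => ?_, fun j => ?_, ?_⟩
  · exact add_le_add (mul_le_mul_of_nonneg_left (hx1 j k hjk) ha)
      (mul_le_mul_of_nonneg_left (hy1 j k hjk) hb)
  · have := add_nonneg (mul_nonneg ha (hx2 j)) (mul_nonneg hb (hy2 j))
    simpa using this
  · have : ∑ j, (a * x j + b * y j) = a * ∑ j, x j + b * ∑ j, y j := by
      rw [Finset.sum_add_distrib, Finset.mul_sum, Finset.mul_sum]
    calc ∑ j, (a • x + b • y) j = a * ∑ j, x j + b * ∑ j, y j := by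
          simpa [Pi.add_apply, smul_eq_mul] using this
      _ ≤ a * 1 + b * 1 := add_le_add (mul_le_mul_of_nonneg_left hx3 ha)
          (mul_le_mul_of_nonneg_left hy3 hb)
      _ = 1 := by rw [mul_one, mul_one, hab]

/-- The box `(-1, 1]^n`. -/
def Breg : BoxIntegral.Box (Fin n) := ⟨fun _ => -1, fun _ => 1, fun _ => by norm_num⟩

lemma finite_lattice (t : ℕ) :
    ({a : Fin n → ℕ | (∀ j k : Fin n, j ≤ k → a k ≤ a j) ∧ ∑ j, a j ≤ t}).Finite := by
  refine (Set.finite_Icc (fun _ => 0) (fun _ => t)).subset fun a ha => ?_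
  refine ⟨fun j => Nat.zero_le _, fun j => ?_⟩
  exact le_trans (Finset.single_le_sum (fun j _ => Nat.zero_le (a j)) (Finset.mem_univ j)) ha.2

/-- The key identity between the integral sum of the indicator function over the
uniform partition at scale `t` and the normalized lattice sum. -/
lemma key_sum (n : ℕ) (hn : 1 ≤ n) (d : ℕ) (F : (Fin n → ℝ) → ℝ)
    (hhom : ∀ t : ℝ, 0 ≤ t → ∀ x : Fin n → ℝ, F (t • x) = t ^ d * F x)
    (t : ℕ) (ht1 : 1 ≤ t) [NeZero t] :
    integralSum ((Sreg n).indicator F) volume.toBoxAdditive.toSMul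
        (unitPartition.prepartition t (Breg n))
      = (∑' a : {a : Fin n → ℕ //
            (∀ j k : Fin n, j ≤ k → a k ≤ a j) ∧ ∑ j, a j ≤ t},
          F (fun j => ((a : Fin n → ℕ) j : ℝ))) / (t : ℝ) ^ (d + n) := by
  classical
  have htpos : (0 : ℝ) < t := by exact_mod_cast Nat.pos_of_ne_zero (NeZero.ne t)
  haveI : Finite {a : Fin n → ℕ //
      (∀ j k : Fin n, j ≤ k → a k ≤ a j) ∧ ∑ j, a j ≤ t} :=
    (finite_lattice n t).to_subtype
  haveI : Fintype {a : Fin n → ℕ //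
      (∀ j k : Fin n, j ≤ k → a k ≤ a j) ∧ ∑ j, a j ≤ t} := Fintype.ofFinite _
  rw [tsum_fintype]
  -- Step A : rewrite the integral sum as a sum over admissible indices
  have hA : integralSum ((Sreg n).indicator F) volume.toBoxAdditive.toSMul
        (unitPartition.prepartition t (Breg n))
      = ∑ ν ∈ unitPartition.admissibleIndex t (Breg n),
          (1 / (t : ℝ) ^ n) * (Sreg n).indicator F (unitPartition.tag t ν) := by
    rw [integralSum]
    rw [show (unitPartition.prepartition t (Breg n)).boxes
        = Finset.image (fun ν => unitPartition.box t ν)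
            (unitPartition.admissibleIndex t (Breg n)) from rfl]
    rw [Finset.sum_image (fun a _ b _ h => unitPartition.box_injective t h)]
    refine Finset.sum_congr rfl fun ν hν => ?_
    rw [unitPartition.prepartition_tag t hν, BoxAdditiveMap.toSMul_apply,
      Measure.toBoxAdditive_apply, smul_eq_mul, measureReal_def, unitPartition.volume_box]
    congr 1
    rw [ENNReal.toReal_div]
    simp [Fintype.card_fin]
  rw [hA]
  -- Step B : drop the terms with tag outside S
  rw [← Finset.sum_filter_of_ne (p := fun ν => unitPartition.tag t ν ∈ Sreg n)
    (fun ν _ hne => by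
      by_contra hmem
      exact hne (by rw [Set.indicator_of_notMem hmem, mul_zero]))]
  -- Step C : the bijection with the lattice points
  rw [eq_div_iff (by positivity), Finset.sum_mul]
  -- casting facts
  have hnn : ∀ ν : Fin n → ℤ, unitPartition.tag t ν ∈ Sreg n → ∀ j, 0 ≤ ν j + 1 := by
    intro ν hν j
    have h1 := hν.2.1 j
    rw [unitPartition.tag_apply] at h1
    rw [le_div_iff₀ htpos] at h1
    have : (0:ℝ) ≤ (ν j : ℝ) + 1 := by linarith
    exact_mod_cast this
  have hc : ∀ ν : Fin n → ℤ, unitPartition.tag t ν ∈ Sreg n →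
      ∀ j, (((ν j + 1).toNat : ℕ) : ℝ) = (t : ℝ) * unitPartition.tag t ν j := by
    intro ν hν j
    have h2 : (((ν j + 1).toNat : ℕ) : ℤ) = ν j + 1 := Int.toNat_of_nonneg (hnn ν hν j)
    have h3 : (((ν j + 1).toNat : ℕ) : ℝ) = ((ν j : ℝ) + 1) := by
      exact_mod_cast congrArg (fun z : ℤ => (z : ℝ)) h2
    rw [h3, unitPartition.tag_apply]
    field_simp
  have hmap : ∀ ν : Fin n → ℤ, unitPartition.tag t ν ∈ Sreg n →
      (∀ j k : Fin n, j ≤ k → (fun j => (ν j + 1).toNat) k ≤ (fun j => (ν j + 1).toNat) j) ∧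
        ∑ j, (fun j => (ν j + 1).toNat) j ≤ t := by
    intro ν hν2
    constructor
    · intro j k hjk
      have : (((ν k + 1).toNat : ℕ) : ℝ) ≤ (((ν j + 1).toNat : ℕ) : ℝ) := by
        rw [hc ν hν2 j, hc ν hν2 k]
        exact mul_le_mul_of_nonneg_left (hν2.1 j k hjk) htpos.le
      exact_mod_cast this
    · have : ((∑ j, (ν j + 1).toNat : ℕ) : ℝ) ≤ (t : ℝ) := by
        push_cast
        calc ∑ j, (((ν j + 1).toNat : ℕ) : ℝ) = ∑ j, (t : ℝ) * unitPartition.tag t ν j := by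
              exact Finset.sum_congr rfl fun j _ => hc ν hν2 j
          _ = (t : ℝ) * ∑ j, unitPartition.tag t ν j := by rw [Finset.mul_sum]
          _ ≤ (t : ℝ) * 1 := mul_le_mul_of_nonneg_left hν2.2.2 htpos.le
          _ = t := mul_one _
      exact_mod_cast this
  refine Finset.sum_bij' (fun ν hν =>
      (⟨fun j => (ν j + 1).toNat,
        (hmap ν (Finset.mem_filter.mp hν).2).1,
        (hmap ν (Finset.mem_filter.mp hν).2).2⟩ :
        {a : Fin n → ℕ // (∀ j k : Fin n, j ≤ k → a k ≤ a j) ∧ ∑ j, a j ≤ t}))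
    (fun a _ => fun i => (a.1 i : ℤ) - 1) (fun ν hν => Finset.mem_univ _) ?_ ?_ ?_ ?_
  · -- hj : inverse maps into the filter
    intro a _
    have htag : unitPartition.tag t (fun i => (a.1 i : ℤ) - 1)
        = fun j => ((a.1 j : ℝ) / t) := by
      funext j
      rw [unitPartition.tag_apply]
      push_cast
      ring
    have haS : unitPartition.tag t (fun i => (a.1 i : ℤ) - 1) ∈ Sreg n := by
      rw [htag]
      refine ⟨fun j k hjk => ?_, fun j => by positivity, ?_⟩
      · have h : ((a.1 k : ℝ)) ≤ (a.1 j : ℝ) := by exact_mod_cast a.2.1 j k hjk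
        exact (div_le_div_iff_of_pos_right htpos).mpr h
      · rw [← Finset.sum_div]
        rw [div_le_one htpos]
        have : ((∑ j, a.1 j : ℕ) : ℝ) ≤ (t : ℝ) := by exact_mod_cast a.2.2
        calc ∑ j, (a.1 j : ℝ) = ((∑ j, a.1 j : ℕ) : ℝ) := by push_cast; ring
          _ ≤ (t : ℝ) := this
    refine Finset.mem_filter.mpr ⟨?_, haS⟩
    rw [unitPartition.mem_admissibleIndex_iff, BoxIntegral.Box.le_iff_bounds]
    have hub : ∀ i, (a.1 i : ℝ) ≤ t := by
      intro i
      have h1 : a.1 i ≤ t := le_trans (Finset.single_le_sum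
        (fun j _ => Nat.zero_le (a.1 j)) (Finset.mem_univ i)) a.2.2
      exact_mod_cast h1
    have h1 : (1:ℝ) ≤ t := by exact_mod_cast ht1
    constructor
    · intro i
      simp only [unitPartition.box_lower]
      show (Breg n).lower i ≤ (((a.1 i : ℤ) - 1 : ℤ) : ℝ) / t
      have h2 : (0:ℝ) ≤ (a.1 i : ℝ) := Nat.cast_nonneg _
      have hB : (Breg n).lower i = -1 := rfl
      rw [hB, le_div_iff₀ htpos]
      push_cast
      linarith
    · intro i
      simp only [unitPartition.box_upper]
      show ((((a.1 i : ℤ) - 1 : ℤ) : ℝ) + 1) / t ≤ (Breg n).upper i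
      have hB : (Breg n).upper i = 1 := rfl
      rw [hB, div_le_one htpos]
      have := hub i
      push_cast
      linarith
  · -- left inverse
    intro ν hν
    have h := hnn ν (Finset.mem_filter.mp hν).2
    funext i
    show (((ν i + 1).toNat : ℕ) : ℤ) - 1 = ν i
    have := h i
    omega
  · -- right inverse
    intro a _
    apply Subtype.ext
    funext i
    show ((a.1 i : ℤ) - 1 + 1).toNat = a.1 i
    omega
  · -- values agree
    intro ν hν
    have hν2 := (Finset.mem_filter.mp hν).2
    rw [Set.indicator_of_mem hν2]
    have hfun : (fun j => ((((ν j + 1).toNat : ℕ)) : ℝ))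
        = (t : ℝ) • unitPartition.tag t ν := by
      funext j
      rw [Pi.smul_apply, smul_eq_mul]
      exact hc ν hν2 j
    show 1 / (t:ℝ) ^ n * F (unitPartition.tag t ν) * (t:ℝ) ^ (d + n)
        = F (fun j => ((((ν j + 1).toNat : ℕ)) : ℝ))
    rw [hfun, hhom t htpos.le, pow_add]
    field_simp

end aux

/-- Proposition 4.4: for a continuous function `F` on `ℝⁿ`, positively homogeneous of
degree `d`, the sum of `F` over the lattice points `Λ_t` (weakly decreasing tuples of
naturals with sum at most `t`) is asymptotic to `(∫_{S_{n,1}} F) · t^{d+n}`. -/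
theorem lattice_sum_homogeneous_asymptotics
    (n : ℕ) (hn : 1 ≤ n) (d : ℕ) (F : (Fin n → ℝ) → ℝ)
    (hcont : Continuous F)
    (hhom : ∀ t : ℝ, 0 ≤ t → ∀ x : Fin n → ℝ, F (t • x) = t ^ d * F x) :
    Tendsto
      (fun t : ℕ =>
        (∑' a : {a : Fin n → ℕ //
            (∀ j k : Fin n, j ≤ k → a k ≤ a j) ∧ ∑ j, a j ≤ t},
          F (fun j => ((a : Fin n → ℕ) j : ℝ))) / (t : ℝ) ^ (d + n))
      atTop
      (𝓝 (∫ x in {x : Fin n → ℝ |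
          (∀ j k : Fin n, j ≤ k → x k ≤ x j) ∧ (∀ j, 0 ≤ x j) ∧ ∑ j, x j ≤ 1},
        F x)) := by
  classical
  have hS : {x : Fin n → ℝ |
      (∀ j k : Fin n, j ≤ k → x k ≤ x j) ∧ (∀ j, 0 ≤ x j) ∧ ∑ j, x j ≤ 1} = Sreg n := rfl
  rw [hS]
  set S := Sreg n with hSdef
  set f : (Fin n → ℝ) → ℝ := S.indicator F with hf
  set B : BoxIntegral.Box (Fin n) := Breg n with hBdef
  have hB : BoxIntegral.hasIntegralVertices B :=
    ⟨fun _ => -1, fun _ => 1, fun i => by simp [hBdef, Breg], fun i => by simp [hBdef, Breg]⟩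
  have hSB : S ⊆ ↑B := by
    rintro x ⟨h1, h2, h3⟩ i
    refine ⟨lt_of_lt_of_le (by norm_num [hBdef, Breg]) (h2 i), ?_⟩
    calc x i ≤ ∑ j, x j := Finset.single_le_sum (fun j _ => h2 j) (Finset.mem_univ i)
      _ ≤ 1 := h3
  have hbnd : ∃ C, ∀ x ∈ BoxIntegral.Box.Icc B, ‖f x‖ ≤ C := by
    obtain ⟨C, hC⟩ := B.isCompact_Icc.exists_bound_of_continuousOn hcont.continuousOn
    refine ⟨max C 0, fun x hx => ?_⟩
    by_cases hxS : x ∈ S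
    · rw [hf, Set.indicator_of_mem hxS]
      exact le_trans (hC x hx) (le_max_left _ _)
    · rw [hf, Set.indicator_of_notMem hxS]
      simp
  have hae : ∀ᵐ x : (Fin n → ℝ), ContinuousAt f x := by
    have hfr : (volume : Measure (Fin n → ℝ)) (frontier S) = 0 :=
      (Sreg_convex n).addHaar_frontier volume
    filter_upwards [compl_mem_ae_iff.mpr hfr] with x hx
    by_cases hcl : x ∈ closure S
    · have hint : x ∈ interior S := by
        by_contra hni
        exact hx ⟨hcl, hni⟩
      have : f =ᶠ[nhds x] F := by
        filter_upwards [mem_interior_iff_mem_nhds.mp hint] with y hy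
        exact Set.indicator_of_mem hy F
      exact hcont.continuousAt.congr this.symm
    · have : f =ᶠ[nhds x] (fun _ => 0) := by
        filter_upwards [isOpen_compl_iff.mpr isClosed_closure |>.mem_nhds hcl] with y hy
        exact Set.indicator_of_notMem (fun h => hy (subset_closure h)) F
      exact continuousAt_const.congr this.symm
  have hInt : BoxIntegral.HasIntegral B .Riemann f volume.toBoxAdditive.toSMul
      (∫ x in S, F x) := by
    have h := MeasureTheory.AEContinuous.hasBoxIntegral (volume : Measure (Fin n → ℝ))
      hbnd hae .Riemann (I := B)
    have heq : ∫ x in ↑B, f x = ∫ x in S, F x := by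
      rw [hf, MeasureTheory.setIntegral_indicator (Sreg_closed n).measurableSet,
        Set.inter_eq_right.mpr hSB]
    rwa [heq] at h
  -- the ε-δ argument
  rw [Metric.tendsto_atTop]
  intro ε hε
  obtain ⟨r, hr, H⟩ := BoxIntegral.hasIntegral_iff.mp hInt (ε / 2) (by positivity)
  have hr0pos : (0 : ℝ) < (r 1 0 : ℝ) := (r 1 0).2
  obtain ⟨N₀, hN₀⟩ := exists_nat_one_div_lt hr0pos
  refine ⟨max (N₀ + 1) 1, fun t ht => ?_⟩
  have ht1 : 1 ≤ t := le_trans (le_max_right _ _) ht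
  haveI : NeZero t := ⟨by omega⟩
  have htpos : (0 : ℝ) < t := by exact_mod_cast Nat.pos_of_ne_zero (NeZero.ne t)
  have htr : 1 / (t : ℝ) ≤ (r 1 0 : ℝ) := by
    refine le_trans ?_ hN₀.le
    have h1 : (N₀ + 1 : ℝ) ≤ t := by
      exact_mod_cast le_trans (le_max_left _ _) ht
    apply div_le_div_of_nonneg_left one_pos.le (by positivity) h1 |>.trans le_rfl
  set π := BoxIntegral.unitPartition.prepartition t B with hπ
  have hrconst : r 1 = fun _ => r 1 0 := funext (hr 1 rfl)
  have hsub : π.IsSubordinate (r 1) := by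
    rw [hrconst]
    have := BoxIntegral.unitPartition.prepartition_isSubordinate t B hr0pos htr
    convert this using 2
  have hmem : IntegrationParams.Riemann.MemBaseSet B 1 (r 1) π :=
    ⟨hsub, fun _ => BoxIntegral.unitPartition.prepartition_isHenstock t B,
      fun h => absurd h Bool.false_ne_true, fun h => absurd h Bool.false_ne_true⟩
  have hpart : π.IsPartition := BoxIntegral.unitPartition.prepartition_isPartition t hB
  have hd := H 1 π hmem hpart
  rw [key_sum n hn d F hhom t ht1] at hd
  calc dist ((∑' a : {a : Fin n → ℕ //
        (∀ j k : Fin n, j ≤ k → a k ≤ a j) ∧ ∑ j, a j ≤ t},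
      F (fun j => ((a : Fin n → ℕ) j : ℝ))) / (t : ℝ) ^ (d + n)) (∫ x in S, F x)
      ≤ ε / 2 := hd
    _ < ε := by linarith
end
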